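/- Let A be an abelian group and H a regular subgroup of Hol(A) = A ⋊ Aut(A). Then the first projection π₁ restricted to H is a bijection onto A, and defining a·b := a + π₂((π₁|_H)⁻¹(a))(b) makes A into a left brace whose multiplicative group is isomorphic to H. -/

import Mathlib

/-- The multiplicative group structure on `AddAut A` that Mathlib provided in 2024
(composition `g * h = h.trans g`); current Mathlib only gives `AddAut A` an additive group. -/
instance addAutGroupOld (A : Type*) [Add A] : Group (AddAut A) where
  mul g h := AddEquiv.trans h g
  one := AddEquiv.refl _
  inv := AddEquiv.symm
  mul_assoc _ _ _ := rfl
  one_mul _ := rfl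
  mul_one _ := rfl
  inv_mul_cancel := AddEquiv.self_trans_symm

def holAction (A : Type*) [AddCommGroup A] : AddAut A →* MulAut (Multiplicative A) where
  toFun f := AddEquiv.toMultiplicative f
  map_one' := rfl
  map_mul' _ _ := rfl

/-- The holomorph `Hol(A) = A ⋊ Aut(A)` of an additive abelian group `A`. -/
abbrev Hol (A : Type*) [AddCommGroup A] :=
  SemidirectProduct (Multiplicative A) (AddAut A) (holAction A)

lemma hol_inv_left (A : Type*) [AddCommGroup A] (x : Hol A) :
    Multiplicative.toAdd (x⁻¹).left
      = (x.right⁻¹ : AddAut A) (- Multiplicative.toAdd x.left) := by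
  simp [SemidirectProduct.inv_left, holAction]
  rfl

lemma hol_mul_left (A : Type*) [AddCommGroup A] (x y : Hol A) :
    Multiplicative.toAdd (x * y).left
      = Multiplicative.toAdd x.left + (x.right : AddAut A) (Multiplicative.toAdd y.left) := by
  simp [SemidirectProduct.mul_left, holAction]
  rfl

/-- If `H` is a regular subgroup of `Hol(A)`, then `π₁` restricted to `H` is
a bijection onto `A`, and the product `a·b := a + π₂((π₁|_H)⁻¹(a))(b)` makes `A` into a
left brace whose multiplicative group is isomorphic to `H`. -/
theorem stmt3 (A : Type*) [AddCommGroup A] (H : Subgroup (Hol A))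
    (hreg : ∀ w : A, ∃! x : Hol A, x ∈ H ∧ Multiplicative.toAdd x.left + x.right w = 0) :
    Function.Bijective (fun x : H => Multiplicative.toAdd (x : Hol A).left) ∧
    ∃ mul : A → A → A,
      -- `mul` is the product `a·b = a + π₂((π₁|_H)⁻¹(a))(b)`:
      (∀ (a b : A) (x : H), Multiplicative.toAdd (x : Hol A).left = a →
        mul a b = a + (x : Hol A).right b) ∧
      -- the left brace axiom `a·(b+c) + a = a·b + a·c`:
      (∀ a b c : A, mul a (b + c) + a = mul a b + mul a c) ∧
      -- `(A, mul)` is a group isomorphic to `H` (via a multiplicative bijection onto `H`):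
      ∃ e : A ≃ H, ∀ a b : A, e (mul a b) = e a * e b := by
  set φ : H → A := fun x => Multiplicative.toAdd (x : Hol A).left with hφ
  have hinj : Function.Injective φ := by
    intro x y hxy
    obtain ⟨z, _, huniq⟩ := hreg 0
    have h1 : (1 : Hol A) ∈ H ∧
        Multiplicative.toAdd (1 : Hol A).left + (1 : Hol A).right 0 = 0 := by
      refine ⟨one_mem H, ?_⟩
      simp [SemidirectProduct.one_left, SemidirectProduct.one_right]
    have h2 : ((y⁻¹ * x : H) : Hol A) ∈ H ∧
        Multiplicative.toAdd ((y⁻¹ * x : H) : Hol A).left +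
          ((y⁻¹ * x : H) : Hol A).right 0 = 0 := by
      refine ⟨(y⁻¹ * x).2, ?_⟩
      have : ((y⁻¹ * x : H) : Hol A) = (y : Hol A)⁻¹ * (x : Hol A) := rfl
      rw [this, hol_mul_left, hol_inv_left]
      have hxy' : Multiplicative.toAdd (x : Hol A).left
          = Multiplicative.toAdd (y : Hol A).left := hxy
      simp [hxy']
    have heq : ((y⁻¹ * x : H) : Hol A) = (1 : Hol A) :=
      (huniq _ h2).trans (huniq _ h1).symm
    have : (y⁻¹ * x : H) = 1 := Subtype.ext heq
    exact (inv_mul_eq_one.mp this).symm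
  have hsurj : Function.Surjective φ := by
    intro a
    obtain ⟨y, ⟨hyH, hy⟩, _⟩ := hreg a
    refine ⟨⟨y⁻¹, inv_mem hyH⟩, ?_⟩
    show Multiplicative.toAdd (y⁻¹).left = a
    rw [hol_inv_left]
    have h0 : -Multiplicative.toAdd y.left = y.right a := by
      have := hy
      linear_combination (norm := abel) -this
    rw [h0]
    exact y.right.symm_apply_apply a
  have hbij : Function.Bijective φ := ⟨hinj, hsurj⟩
  refine ⟨hbij, ?_⟩
  set e : A ≃ H := (Equiv.ofBijective φ hbij).symm with he
  have hφe : ∀ a : A, φ (e a) = a := fun a =>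
    (Equiv.ofBijective φ hbij).apply_symm_apply a
  set mul : A → A → A := fun a b => a + ((e a : Hol A).right : AddAut A) b with hmul
  have prop1 : ∀ (a b : A) (x : H), Multiplicative.toAdd (x : Hol A).left = a →
      mul a b = a + (x : Hol A).right b := by
    intro a b x hx
    have : x = e a := by
      apply hinj
      rw [hφe]; exact hx
    rw [hmul, this]
  refine ⟨mul, prop1, ?_, ?_⟩
  · intro a b c
    simp only [hmul, map_add]
    abel
  · refine ⟨e, ?_⟩
    intro a b
    have : mul a b = φ (e a * e b) := by
      have hcoe : ((e a * e b : H) : Hol A) = (e a : Hol A) * (e b : Hol A) := rfl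
      show mul a b = Multiplicative.toAdd ((e a * e b : H) : Hol A).left
      rw [hcoe, hol_mul_left]
      have h1 : Multiplicative.toAdd ((e a : H) : Hol A).left = a := hφe a
      have h2 : Multiplicative.toAdd ((e b : H) : Hol A).left = b := hφe b
      rw [h1, h2]
    rw [this]
    apply hinj
    rw [hφe]
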